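/- arXiv:1705.07261 — 2 statements merged into one kernel-verified Lean document; each statement's English description precedes it below -/
import Mathlib

section
/- Consider one inner loop of SARAH (SARAH-IN) with each f_i L-smooth, inner loop size m = n − 1, and learning rate η = 2 / ( L ( sqrt(4(n/b) − 3) + 1 ) ). If the output w̃ equals w_t with t chosen uniformly at random from {0,1,...,n−1}, then E[||∇P(w̃)||²] ≤ ( L ( sqrt(4(n/b) − 3) + 1 ) / n ) · [P(w_0) − P(w_*)], where w_* is a global minimizer of P. -/
open scoped BigOperators

noncomputable section

/-- Vectors in `ℝ^d`. -/
abbrev Vec (d : ℕ) := EuclideanSpace ℝ (Fin d)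

/-- The type of mini-batches of size `b` from `{1,…,n}` (modeled as `Fin n`). -/
def Batch (n b : ℕ) : Type := {s : Finset (Fin n) // s.card = b}

instance (n b : ℕ) : Fintype (Batch n b) :=
  inferInstanceAs (Fintype {s : Finset (Fin n) // s.card = b})

/-- Expectation (uniform average) over a finite sample space. -/
def expec {Ω : Type*} [Fintype Ω] (F : Ω → ℝ) : ℝ :=
  (Fintype.card Ω : ℝ)⁻¹ * ∑ ω, F ω

/-- The SARAH-IN state `(w_t, v_t)` given a starting point `w0`, a learning rate `η`,
a batch size `b` and a sequence of mini-batches `I` (where `I t` is the batch used to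
form `v_t`, for `t ≥ 1`). -/
def sarahState {d n : ℕ} (f : Fin n → Vec d → ℝ) (w0 : Vec d) (η : ℝ) (b : ℕ)
    (I : ℕ → Finset (Fin n)) : ℕ → Vec d × Vec d
  | 0 => (w0, (n : ℝ)⁻¹ • ∑ i, gradient (f i) w0)
  | t + 1 =>
    let p := sarahState f w0 η b I t
    let w' := p.1 - η • p.2
    (w', (b : ℝ)⁻¹ • ∑ i ∈ I (t + 1), (gradient (f i) w' - gradient (f i) p.1) + p.2)

/-- Extend a finite sequence of mini-batches to all of `ℕ` (indices `≥ T` are irrelevant). -/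
def pad {n b T : ℕ} (ω : Fin T → Batch n b) : ℕ → Finset (Fin n) :=
  fun t => if h : t < T then (ω ⟨t, h⟩).1 else ∅

namespace SarahAux

variable {F : Type*} [NormedAddCommGroup F] [InnerProductSpace ℝ F]

local notation "⟪" x ", " y "⟫" => @inner ℝ _ _ x y

variable [CompleteSpace F]


lemma hasGradientAt_avg {n : ℕ} (f : Fin n → F → ℝ) (hdiff : ∀ i, Differentiable ℝ (f i))
    (c : ℝ) (w : F) :
    HasGradientAt (fun w => c * ∑ i, f i w) (c • ∑ i, gradient (f i) w) w := by
  rw [hasGradientAt_iff_hasFDerivAt]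
  have h : HasFDerivAt (fun w => c * ∑ i, f i w)
      (c • ∑ i, (InnerProductSpace.toDual ℝ F) (gradient (f i) w)) w := by
    have hs : HasFDerivAt (fun w => ∑ i, f i w)
        (∑ i, (InnerProductSpace.toDual ℝ F) (gradient (f i) w)) w :=
      HasFDerivAt.fun_sum (fun i _ => ((hdiff i w).hasGradientAt).hasFDerivAt)
    simpa using hs.const_mul c
  refine h.congr_fderiv ?_
  simp [map_sum]

lemma descent_lemma (P : F → ℝ) (G : F → F) (hG : ∀ x, HasGradientAt P (G x) x)
    {L : ℝ} (hL : 0 ≤ L) (hlip : ∀ x y, ‖G x - G y‖ ≤ L * ‖x - y‖) (x y : F) :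
    P y ≤ P x + ⟪G x, y - x⟫ + L / 2 * ‖y - x‖ ^ 2 := by
  set v := y - x with hv
  have hline : ∀ t : ℝ, HasDerivAt (fun t : ℝ => x + t • v) v t := fun t => by
    simpa using ((hasDerivAt_id t).smul_const v).const_add x
  have hphi : ∀ t : ℝ, HasDerivAt (fun t : ℝ => P (x + t • v)) ⟪G (x + t • v), v⟫ t := by
    intro t
    have := ((hG (x + t • v)).hasFDerivAt).comp_hasDerivAt t (hline t)
    simp only [InnerProductSpace.toDual_apply_apply] at this
    exact this
  set ψ : ℝ → ℝ := fun t => P (x + t • v) - t * ⟪G x, v⟫ - L / 2 * t ^ 2 * ‖v‖ ^ 2 with hψ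
  have hψ' : ∀ t : ℝ, HasDerivAt ψ (⟪G (x + t • v) - G x, v⟫ - L * t * ‖v‖ ^ 2) t := by
    intro t
    have h1 : HasDerivAt (fun t : ℝ => t * ⟪G x, v⟫) ⟪G x, v⟫ t := by
      simpa using (hasDerivAt_id t).mul_const ⟪G x, v⟫
    have h2 : HasDerivAt (fun t : ℝ => L / 2 * t ^ 2 * ‖v‖ ^ 2) (L * t * ‖v‖ ^ 2) t := by
      have := (((hasDerivAt_pow 2 t)).const_mul (L / 2)).mul_const (‖v‖ ^ 2)
      exact this.congr_deriv (by ring)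
    have := ((hphi t).sub h1).sub h2
    refine this.congr_deriv ?_
    rw [inner_sub_left]
    try ring
  have hanti : AntitoneOn ψ (Set.Icc (0:ℝ) 1) := by
    apply antitoneOn_of_deriv_nonpos (convex_Icc 0 1)
    · exact fun t _ => ((hψ' t).continuousAt).continuousWithinAt
    · exact fun t _ => ((hψ' t).differentiableAt).differentiableWithinAt
    · intro t ht
      rw [interior_Icc] at ht
      rw [(hψ' t).deriv]
      have hcs : ⟪G (x + t • v) - G x, v⟫ ≤ ‖G (x + t • v) - G x‖ * ‖v‖ := real_inner_le_norm _ _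
      have hbd : ‖G (x + t • v) - G x‖ ≤ L * (t * ‖v‖) := by
        have := hlip (x + t • v) x
        simpa [norm_smul, abs_of_pos ht.1, mul_assoc] using this
      nlinarith [norm_nonneg v, norm_nonneg (G (x + t • v) - G x), ht.1.le,
        mul_le_mul_of_nonneg_right hbd (norm_nonneg v)]
  have h01 := hanti (Set.left_mem_Icc.2 one_pos.le) (Set.right_mem_Icc.2 one_pos.le) one_pos.le
  have e0 : ψ 0 = P x := by simp [hψ]
  have e1 : ψ 1 = P y - ⟪G x, v⟫ - L / 2 * ‖v‖ ^ 2 := by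
    have : x + v = y := by rw [hv]; abel
    simp [hψ, this]
  rw [e0, e1] at h01
  linarith



variable {n b : ℕ}

lemma batch_nonempty (hbn : b ≤ n) : Nonempty (Batch n b) := by
  obtain ⟨t, -, ht⟩ := Finset.exists_subset_card_eq
    (s := (Finset.univ : Finset (Fin n))) (n := b) (by simpa using hbn)
  exact ⟨⟨t, ht⟩⟩

lemma card_batch_pos (hbn : b ≤ n) : 0 < Fintype.card (Batch n b) := by
  have := batch_nonempty (n := n) (b := b) hbn
  exact Fintype.card_pos

/-- number of batches containing a given finset -/
def cnt (n b : ℕ) (T : Finset (Fin n)) : ℕ :=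
  (Finset.univ.filter (fun s : Batch n b => T ⊆ s.1)).card

lemma cnt_image (σ : Equiv.Perm (Fin n)) (T : Finset (Fin n)) :
    cnt n b (T.image σ) = cnt n b T := by
  classical
  unfold cnt
  refine Finset.card_bij'
    (fun s _ => (⟨s.1.image σ.symm, by
      rw [Finset.card_image_of_injective _ σ.symm.injective, s.2]⟩ : Batch n b))
    (fun s _ => (⟨s.1.image σ, by
      rw [Finset.card_image_of_injective _ σ.injective, s.2]⟩ : Batch n b))
    ?_ ?_ ?_ ?_
  · intro s hs
    simp only [Finset.mem_filter, Finset.mem_univ, true_and] at hs ⊢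
    refine Finset.mem_filter.2 ⟨Finset.mem_univ _, ?_⟩
    intro x hx
    have : σ x ∈ s.1 := hs (Finset.mem_image_of_mem σ hx)
    simpa using Finset.mem_image_of_mem σ.symm this
  · intro s hs
    simp only [Finset.mem_filter, Finset.mem_univ, true_and] at hs ⊢
    refine Finset.mem_filter.2 ⟨Finset.mem_univ _, ?_⟩
    exact (Finset.image_subset_image hs).trans le_rfl
  · intro s hs
    apply Subtype.ext
    simp [Finset.image_image]
  · intro s hs
    apply Subtype.ext
    simp [Finset.image_image]

lemma cnt_singleton_const (i i' : Fin n) : cnt n b {i} = cnt n b {i'} := by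
  have := cnt_image (b := b) (Equiv.swap i i') {i}
  simpa [Equiv.swap_apply_left] using this.symm

lemma cnt_pair_const {i j i' j' : Fin n} (hij : i ≠ j) (hij' : i' ≠ j') :
    cnt n b {i, j} = cnt n b {i', j'} := by
  set a : Fin n := Equiv.swap i i' j with ha
  set σ : Equiv.Perm (Fin n) := (Equiv.swap a j') * (Equiv.swap i i') with hσ
  have hia : i' ≠ a := by
    intro h
    have h2 := congrArg (Equiv.swap i i') h.symm
    rw [Equiv.swap_apply_self, Equiv.swap_apply_right] at h2
    exact hij h2.symm
  have hσi : σ i = i' := by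
    simp only [hσ, Equiv.Perm.mul_apply, Equiv.swap_apply_left]
    exact Equiv.swap_apply_of_ne_of_ne hia hij'
  have hσj : σ j = j' := by
    simp only [hσ, Equiv.Perm.mul_apply, ← ha, Equiv.swap_apply_left]
  have := cnt_image (b := b) σ {i, j}
  rw [Finset.image_insert, Finset.image_singleton, hσi, hσj] at this
  exact this.symm

lemma pair_subset_iff {i j : Fin n} {s : Finset (Fin n)} :
    ({i, j} : Finset (Fin n)) ⊆ s ↔ i ∈ s ∧ j ∈ s := by
  simp [Finset.insert_subset_iff]

lemma sum_cnt_singleton :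
    ∑ i : Fin n, cnt n b {i} = Fintype.card (Batch n b) * b := by
  classical
  unfold cnt
  simp only [Finset.card_filter]
  rw [Finset.sum_comm]
  have : ∀ s : Batch n b, (∑ i : Fin n, if ({i} : Finset (Fin n)) ⊆ s.1 then 1 else 0) = b := by
    intro s
    simp only [Finset.singleton_subset_iff]
    rw [Finset.sum_ite_mem]
    simpa using s.2
  rw [Finset.sum_congr rfl (fun s _ => this s)]
  simp [Finset.card_univ, mul_comm]

lemma sum_cnt_pair (i : Fin n) :
    ∑ j : Fin n, cnt n b {i, j} = cnt n b {i} * b := by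
  classical
  unfold cnt
  simp only [Finset.card_filter]
  rw [Finset.sum_comm]
  have : ∀ s : Batch n b, (∑ j : Fin n, if ({i, j} : Finset (Fin n)) ⊆ s.1 then 1 else 0)
      = if ({i} : Finset (Fin n)) ⊆ s.1 then b else 0 := by
    intro s
    simp only [pair_subset_iff, Finset.singleton_subset_iff, ite_and]
    by_cases h : i ∈ s.1
    · simp only [h, if_true]
      rw [Finset.sum_ite_mem]
      simpa using s.2
    · simp [h]
  rw [Finset.sum_congr rfl (fun s _ => this s)]
  rw [Finset.sum_ite, Finset.sum_const, Finset.sum_const]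
  simp [Finset.singleton_subset_iff]


variable {F : Type*} [NormedAddCommGroup F] [InnerProductSpace ℝ F]


lemma sum_batch_zero (hn : 2 ≤ n) (y : Fin n → F) (hy : ∑ i, y i = 0) :
    ∑ s : Batch n b, (∑ i ∈ s.1, y i) = 0 := by
  classical
  have i0 : Fin n := ⟨0, by omega⟩
  have step : ∀ s : Batch n b, (∑ i ∈ s.1, y i)
      = ∑ i : Fin n, (if i ∈ s.1 then y i else 0) := by
    intro s
    rw [Finset.sum_ite_mem, Finset.univ_inter]
  rw [Finset.sum_congr rfl (fun s _ => step s), Finset.sum_comm]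
  have step2 : ∀ i : Fin n, (∑ s : Batch n b, if i ∈ s.1 then y i else 0)
      = (cnt n b {i} : ℕ) • y i := by
    intro i
    rw [← Finset.sum_filter, Finset.sum_const]
    congr 1
    unfold cnt
    congr 1
    apply Finset.filter_congr
    intro s _
    simp [Finset.singleton_subset_iff]
  rw [Finset.sum_congr rfl (fun i _ => step2 i)]
  have step3 : ∀ i : Fin n, (cnt n b {i} : ℕ) • y i = (cnt n b {i0} : ℕ) • y i := by
    intro i
    rw [cnt_singleton_const i i0]
  rw [Finset.sum_congr rfl (fun i _ => step3 i), ← Finset.smul_sum, hy, smul_zero]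

lemma sum_batch_sq (hn : 2 ≤ n) (hb : 1 ≤ b) (hbn : b ≤ n) (y : Fin n → F)
    (hy : ∑ i, y i = 0) :
    ∑ s : Batch n b, ‖(b:ℝ)⁻¹ • ∑ i ∈ s.1, y i‖^2
      = (Fintype.card (Batch n b) : ℝ) * (((n:ℝ) - b) / ((b:ℝ) * ((n:ℝ) - 1)))
          * ((n:ℝ)⁻¹ * ∑ i, ‖y i‖^2) := by
  classical
  set i0 : Fin n := ⟨0, by omega⟩ with hi0
  set j0 : Fin n := ⟨1, by omega⟩ with hj0
  have hij0 : i0 ≠ j0 := by simp [hi0, hj0, Fin.ext_iff]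
  set α : ℝ := ((cnt n b {i0} : ℕ) : ℝ) with hα
  set β : ℝ := ((cnt n b ({i0, j0} : Finset (Fin n)) : ℕ) : ℝ) with hβ
  set C : ℝ := ((Fintype.card (Batch n b) : ℕ) : ℝ) with hC
  have cntsingle : ∀ i : Fin n, ((cnt n b {i} : ℕ) : ℝ) = α := by
    intro i; rw [hα, cnt_singleton_const i i0]
  have cntpair : ∀ i j : Fin n, i ≠ j → ((cnt n b {i, j} : ℕ) : ℝ) = β := by
    intro i j h
    rw [hβ, cnt_pair_const h hij0]
  -- counting relations
  have hA : (n : ℝ) * α = C * b := by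
    have h1 : ∑ i : Fin n, cnt n b {i} = Fintype.card (Batch n b) * b :=
      sum_cnt_singleton
    have h2 : ((∑ i : Fin n, cnt n b {i} : ℕ) : ℝ) = (n : ℝ) * α := by
      push_cast
      rw [Finset.sum_congr rfl (fun i _ => cntsingle i), Finset.sum_const,
        Finset.card_univ, Fintype.card_fin, nsmul_eq_mul]
    rw [← h2, h1]
    push_cast
    ring
  have hB : α + ((n : ℝ) - 1) * β = α * b := by
    have h1 : ∑ j : Fin n, cnt n b {i0, j} = cnt n b {i0} * b := sum_cnt_pair i0
    have h2 : ((∑ j : Fin n, cnt n b {i0, j} : ℕ) : ℝ) = α + ((n : ℝ) - 1) * β := by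
      push_cast
      rw [← Finset.sum_erase_add _ _ (Finset.mem_univ i0)]
      have e1 : ∑ j ∈ Finset.univ.erase i0, ((cnt n b {i0, j} : ℕ) : ℝ)
          = ((n : ℝ) - 1) * β := by
        rw [Finset.sum_congr rfl (fun j hj => cntpair i0 j
          (Ne.symm (Finset.ne_of_mem_erase hj)))]
        rw [Finset.sum_const, Finset.card_erase_of_mem (Finset.mem_univ i0),
          Finset.card_univ, Fintype.card_fin, nsmul_eq_mul]
        have : ((n - 1 : ℕ) : ℝ) = (n : ℝ) - 1 := by
          have : 1 ≤ n := by omega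
          push_cast [Nat.cast_sub this]
          ring
        rw [this]
      have e2 : ((cnt n b ({i0, i0} : Finset (Fin n)) : ℕ) : ℝ) = α := by
        rw [show ({i0, i0} : Finset (Fin n)) = {i0} by simp]
        try exact cntsingle i0
      rw [e1, e2]
      ring
    have := congrArg (fun k : ℕ => (k : ℝ)) h1
    rw [h2] at this
    rw [this]
    push_cast
    try ring
  -- expansion
  have expand : ∑ s : Batch n b, ‖(∑ i ∈ s.1, y i)‖^2 = (α - β) * ∑ i, ‖y i‖^2 := by
    have e1 : ∀ s : Batch n b, ‖(∑ i ∈ s.1, y i)‖^2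
        = ∑ i : Fin n, ∑ j : Fin n,
            (if i ∈ s.1 ∧ j ∈ s.1 then ⟪y i, y j⟫ else 0) := by
      intro s
      rw [← real_inner_self_eq_norm_sq, sum_inner]
      have einner : ∀ i, ⟪y i, ∑ j ∈ s.1, y j⟫ = ∑ j ∈ s.1, ⟪y i, y j⟫ :=
        fun i => inner_sum _ _ _
      rw [Finset.sum_congr rfl (fun i _ => einner i)]
      have hout : ∑ i ∈ s.1, (∑ j ∈ s.1, ⟪y i, y j⟫)
          = ∑ i : Fin n, (if i ∈ s.1 then ∑ j ∈ s.1, ⟪y i, y j⟫ else 0) := by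
        rw [Finset.sum_ite_mem, Finset.univ_inter]
      rw [hout]
      apply Finset.sum_congr rfl
      intro i _
      by_cases h : i ∈ s.1
      · simp only [h, if_true, true_and]
        rw [Finset.sum_ite_mem, Finset.univ_inter]
      · simp [h]
    rw [Finset.sum_congr rfl (fun s _ => e1 s)]
    rw [Finset.sum_comm]
    have swap2 : ∀ i : Fin n, ∑ s : Batch n b, ∑ j : Fin n,
        (if i ∈ s.1 ∧ j ∈ s.1 then ⟪y i, y j⟫ else 0)
        = ∑ j : Fin n, ∑ s : Batch n b,
            (if i ∈ s.1 ∧ j ∈ s.1 then ⟪y i, y j⟫ else 0) :=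
      fun i => Finset.sum_comm
    rw [Finset.sum_congr rfl (fun i _ => swap2 i)]
    have inner_s : ∀ i j : Fin n, ∑ s : Batch n b,
        (if i ∈ s.1 ∧ j ∈ s.1 then ⟪y i, y j⟫ else 0)
        = ((cnt n b {i, j} : ℕ) : ℝ) * ⟪y i, y j⟫ := by
      intro i j
      rw [← Finset.sum_filter, Finset.sum_const, nsmul_eq_mul]
      congr 2
      unfold cnt
      congr 1
      apply Finset.filter_congr
      intro s _
      simp [pair_subset_iff]
    rw [Finset.sum_congr rfl (fun i _ => Finset.sum_congr rfl
      (fun j _ => inner_s i j))]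
    have per_i : ∀ i : Fin n,
        ∑ j : Fin n, ((cnt n b {i, j} : ℕ) : ℝ) * ⟪y i, y j⟫
          = (α - β) * ‖y i‖^2 := by
      intro i
      rw [← Finset.sum_erase_add _ _ (Finset.mem_univ i)]
      have ed : ((cnt n b ({i, i} : Finset (Fin n)) : ℕ) : ℝ) * ⟪y i, y i⟫
          = α * ‖y i‖^2 := by
        rw [show ({i, i} : Finset (Fin n)) = {i} by simp, cntsingle i,
          real_inner_self_eq_norm_sq]
      have eo : ∑ j ∈ Finset.univ.erase i, ((cnt n b {i, j} : ℕ) : ℝ) * ⟪y i, y j⟫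
          = - β * ‖y i‖^2 := by
        rw [Finset.sum_congr rfl (fun j hj => by
          rw [cntpair i j (Ne.symm (Finset.ne_of_mem_erase hj))])]
        rw [← Finset.mul_sum, ← inner_sum]
        have hrest : ∑ j ∈ Finset.univ.erase i, y j = - y i := by
          have := Finset.sum_erase_add Finset.univ y (Finset.mem_univ i)
          rw [hy] at this
          exact eq_neg_of_add_eq_zero_left this
        rw [hrest, inner_neg_right, real_inner_self_eq_norm_sq]
        ring
      rw [ed, eo]
      ring
    rw [Finset.sum_congr rfl (fun i _ => per_i i), ← Finset.mul_sum]
  -- put it together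
  have scal : ∀ s : Batch n b, ‖(b:ℝ)⁻¹ • ∑ i ∈ s.1, y i‖^2
      = ((b:ℝ)⁻¹)^2 * ‖(∑ i ∈ s.1, y i)‖^2 := by
    intro s
    rw [norm_smul]
    rw [Real.norm_eq_abs, abs_of_nonneg (by positivity)]
    ring
  rw [Finset.sum_congr rfl (fun s _ => scal s), ← Finset.mul_sum, expand]
  have hb0 : (b : ℝ) ≠ 0 := by positivity
  have hn0 : (n : ℝ) ≠ 0 := by positivity
  have hn1 : (n : ℝ) - 1 ≠ 0 := by
    have : (2 : ℝ) ≤ n := by exact_mod_cast hn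
    nlinarith
  field_simp
  linear_combination ((∑ i, ‖y i‖^2) * ((n:ℝ) - b)) * hA
    - ((∑ i, ‖y i‖^2) * (n:ℝ)) * hB

lemma sum_norm_sub_mean_le (δ : Fin n → F) :
    ∑ i, ‖δ i - (n:ℝ)⁻¹ • ∑ j, δ j‖^2 ≤ ∑ i, ‖δ i‖^2 := by
  classical
  set m : F := (n:ℝ)⁻¹ • ∑ j, δ j with hm
  have expand : ∀ i, ‖δ i - m‖^2 = ‖δ i‖^2 - 2 * ⟪δ i, m⟫ + ‖m‖^2 := by
    intro i
    rw [norm_sub_sq_real]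
  rw [Finset.sum_congr rfl (fun i _ => expand i)]
  rcases Nat.eq_zero_or_pos n with h0 | hpos
  · subst h0; simp
  have hsum : ∑ i : Fin n, ⟪δ i, m⟫ = (n : ℝ) * ‖m‖^2 := by
    rw [← sum_inner]
    have : ∑ j, δ j = (n : ℝ) • m := by
      rw [hm, smul_smul, mul_inv_cancel₀ (by positivity), one_smul]
    rw [this, real_inner_smul_left, real_inner_self_eq_norm_sq]
  rw [Finset.sum_add_distrib, Finset.sum_sub_distrib, ← Finset.mul_sum, hsum,
    Finset.sum_const, Finset.card_univ, Fintype.card_fin]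
  have h1 : 0 ≤ ‖m‖^2 := by positivity
  have h2 : (0:ℝ) ≤ n := by positivity
  rw [nsmul_eq_mul]
  nlinarith


lemma sum_update_indep {ι κ : Type*} [Fintype ι] [Fintype κ] [DecidableEq ι] (t : ι)
    (G : (ι → κ) → κ → ℝ)
    (hG : ∀ (ω : ι → κ) (s s' : κ), G (Function.update ω t s') s = G ω s) :
    (Fintype.card κ : ℝ) * ∑ ω : ι → κ, G ω (ω t)
      = ∑ ω : ι → κ, ∑ s : κ, G ω s := by
  classical
  set e : ((ι → κ) × κ) → ((ι → κ) × κ) :=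
    fun p => (Function.update p.1 t p.2, p.1 t) with he
  have hinv : Function.Involutive e := by
    intro p
    simp only [he, Function.update_self, Function.update_idem, Function.update_eq_self]
  have key : ∑ p : (ι → κ) × κ, G p.1 (p.1 t)
      = ∑ p : (ι → κ) × κ, G p.1 p.2 := by
    refine Fintype.sum_bijective e hinv.bijective _ _ ?_
    intro p
    simp only [he, Function.update_self]
    rw [hG]
  calc (Fintype.card κ : ℝ) * ∑ ω : ι → κ, G ω (ω t)
      = ∑ ω : ι → κ, ∑ _s : κ, G ω (ω t) := by
        rw [Finset.mul_sum]
        refine Finset.sum_congr rfl (fun ω _ => ?_)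
        rw [Finset.sum_const, Finset.card_univ, nsmul_eq_mul]
    _ = ∑ p : (ι → κ) × κ, G p.1 (p.1 t) :=
        (Fintype.sum_prod_type (fun p : (ι → κ) × κ => G p.1 (p.1 t))).symm
    _ = ∑ p : (ι → κ) × κ, G p.1 p.2 := key
    _ = ∑ ω : ι → κ, ∑ s : κ, G ω s := Fintype.sum_prod_type _

lemma sarahState_congr {d n : ℕ} (f : Fin n → Vec d → ℝ) (w0 : Vec d) (η : ℝ) (b : ℕ)
    (I J : ℕ → Finset (Fin n)) (t : ℕ) (h : ∀ k, 1 ≤ k → k ≤ t → I k = J k) :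
    sarahState f w0 η b I t = sarahState f w0 η b J t := by
  induction t with
  | zero => rfl
  | succ t ih =>
    have ht : sarahState f w0 η b I t = sarahState f w0 η b J t :=
      ih (fun k h1 h2 => h k h1 (by omega))
    simp only [sarahState, ht, h (t+1) (by omega) le_rfl]



variable {n b : ℕ}

set_option maxHeartbeats 2000000 in
/-- Abstract core of the SARAH analysis. -/
theorem sarah_core [CompleteSpace F] (hn : 2 ≤ n) (hb : 1 ≤ b) (hbn : b ≤ n)
    (P : F → ℝ) (G : F → F) (g : Fin n → F → F) (L η : ℝ) (hL : 0 < L) (hη : 0 < η)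
    (hPG : ∀ x, HasGradientAt P (G x) x)
    (hGlip : ∀ x y, ‖G x - G y‖ ≤ L * ‖x - y‖)
    (hgs : ∀ i x y, ‖g i x - g i y‖ ≤ L * ‖x - y‖)
    (hGavg : ∀ x, G x = (n:ℝ)⁻¹ • ∑ i, g i x)
    (wstar : F) (hmin : ∀ w, P wstar ≤ P w) (w0 : F)
    (W V : (Fin n → Batch n b) → ℕ → F)
    (hW0 : ∀ ω, W ω 0 = w0) (hV0 : ∀ ω, V ω 0 = G w0)
    (hWs : ∀ ω t, W ω (t+1) = W ω t - η • V ω t)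
    (hVs : ∀ ω (t : ℕ) (h : t + 1 < n), V ω (t+1)
      = (b:ℝ)⁻¹ • ∑ i ∈ (ω ⟨t+1, h⟩).1, (g i (W ω (t+1)) - g i (W ω t)) + V ω t)
    (hWinv : ∀ ω (j : Fin n) s t, t < j.val → W (Function.update ω j s) t = W ω t)
    (hVinv : ∀ ω (j : Fin n) s t, t < j.val → V (Function.update ω j s) t = V ω t)
    (hbracket : ((n:ℝ) - b) / ((b:ℝ) * ((n:ℝ) - 1)) * (L^2*η^2) * ((n:ℝ) - 1)
      ≤ 1 - L * η) :
    ∑ t ∈ Finset.range n, ∑ ω : Fin n → Batch n b, ‖G (W ω t)‖^2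
      ≤ 2/η * ((Fintype.card (Fin n → Batch n b) : ℝ) * (P w0 - P wstar)) := by
  classical
  have hn0 : (0:ℝ) < n := by positivity
  have hb0 : (0:ℝ) < b := by exact_mod_cast hb
  have hn1 : (0:ℝ) < (n:ℝ) - 1 := by
    have : (2:ℝ) ≤ n := by exact_mod_cast hn
    linarith
  have hbnR : (b:ℝ) ≤ n := by exact_mod_cast hbn
  set A : (Fin n → Batch n b) → ℕ → ℝ := fun ω t => ‖G (W ω t)‖^2 with hAdef
  set B : (Fin n → Batch n b) → ℕ → ℝ := fun ω t => ‖V ω t‖^2 with hBdef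
  set Cq : (Fin n → Batch n b) → ℕ → ℝ := fun ω t => ‖G (W ω t) - V ω t‖^2 with hCdef
  have hBnn : ∀ ω t, 0 ≤ B ω t := fun ω t => by positivity
  -- one-step descent
  have step1 : ∀ ω t, P (W ω (t+1)) - P (W ω t)
      ≤ -(η/2) * A ω t - (η/2*(1 - L*η)) * B ω t + (η/2) * Cq ω t := by
    intro ω t
    have hd := descent_lemma P G hPG hL.le hGlip (W ω t) (W ω (t+1))
    have hw : W ω (t+1) - W ω t = -(η • V ω t) := by
      rw [hWs ω t]; abel
    rw [hw] at hd
    have hip : ⟪G (W ω t), -(η • V ω t)⟫ = -(η * ⟪G (W ω t), V ω t⟫) := by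
      rw [inner_neg_right, real_inner_smul_right]
    have hnv : ‖-(η • V ω t)‖^2 = η^2 * B ω t := by
      rw [norm_neg, norm_smul, Real.norm_eq_abs, abs_of_pos hη, mul_pow, hBdef]
    have hid : Cq ω t = A ω t - 2 * ⟪G (W ω t), V ω t⟫ + B ω t := by
      simp only [hCdef, hAdef, hBdef]
      exact norm_sub_sq_real _ _
    rw [hip, hnv] at hd
    nlinarith [hd, hid]
  -- per-path telescoping
  have step2 : ∀ ω, η/2 * ∑ t ∈ Finset.range n, A ω t
      ≤ (P w0 - P wstar) + (η/2) * ∑ t ∈ Finset.range n, Cq ω t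
        - (η/2*(1 - L*η)) * ∑ t ∈ Finset.range n, B ω t := by
    intro ω
    have htel : ∑ t ∈ Finset.range n, (P (W ω (t+1)) - P (W ω t))
        = P (W ω n) - P (W ω 0) := Finset.sum_range_sub (fun t => P (W ω t)) n
    have hsum := Finset.sum_le_sum (fun t (_ : t ∈ Finset.range n) => step1 ω t)
    rw [htel] at hsum
    have hexp : ∑ t ∈ Finset.range n,
        (-(η/2) * A ω t - (η/2*(1 - L*η)) * B ω t + (η/2) * Cq ω t)
        = -(η/2) * ∑ t ∈ Finset.range n, A ω t
          - (η/2*(1 - L*η)) * ∑ t ∈ Finset.range n, B ω t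
          + (η/2) * ∑ t ∈ Finset.range n, Cq ω t := by
      rw [Finset.sum_add_distrib, Finset.sum_sub_distrib, ← Finset.mul_sum,
        ← Finset.mul_sum, ← Finset.mul_sum]
    rw [hexp] at hsum
    have hPn : P wstar ≤ P (W ω n) := hmin _
    have hW00 : P (W ω 0) = P w0 := by rw [hW0]
    rw [hW00] at hsum
    linarith
  -- expectations (unnormalized sums)
  set SA : ℕ → ℝ := fun t => ∑ ω : Fin n → Batch n b, A ω t with hSAdef
  set SB : ℕ → ℝ := fun t => ∑ ω : Fin n → Batch n b, B ω t with hSBdef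
  set SC : ℕ → ℝ := fun t => ∑ ω : Fin n → Batch n b, Cq ω t with hSCdef
  have hSBnn : ∀ t, 0 ≤ SB t := fun t => Finset.sum_nonneg (fun ω _ => hBnn ω t)
  set cΩ : ℝ := (Fintype.card (Fin n → Batch n b) : ℝ) with hcΩdef
  have step3 : η/2 * ∑ t ∈ Finset.range n, SA t
      ≤ cΩ * (P w0 - P wstar) + (η/2) * ∑ t ∈ Finset.range n, SC t
        - (η/2*(1 - L*η)) * ∑ t ∈ Finset.range n, SB t := by
    have hsum := Finset.sum_le_sum
      (fun ω (_ : ω ∈ (Finset.univ : Finset (Fin n → Batch n b))) => step2 ω)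
    have swapA : ∑ ω : Fin n → Batch n b, ∑ t ∈ Finset.range n, A ω t
        = ∑ t ∈ Finset.range n, SA t := Finset.sum_comm
    have swapB : ∑ ω : Fin n → Batch n b, ∑ t ∈ Finset.range n, B ω t
        = ∑ t ∈ Finset.range n, SB t := Finset.sum_comm
    have swapC : ∑ ω : Fin n → Batch n b, ∑ t ∈ Finset.range n, Cq ω t
        = ∑ t ∈ Finset.range n, SC t := Finset.sum_comm
    have hL1 : ∑ ω : Fin n → Batch n b, (η/2 * ∑ t ∈ Finset.range n, A ω t)
        = η/2 * ∑ t ∈ Finset.range n, SA t := by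
      rw [← Finset.mul_sum, swapA]
    have hL2 : ∑ ω : Fin n → Batch n b,
        ((P w0 - P wstar) + (η/2) * ∑ t ∈ Finset.range n, Cq ω t
          - (η/2*(1 - L*η)) * ∑ t ∈ Finset.range n, B ω t)
        = cΩ * (P w0 - P wstar) + (η/2) * ∑ t ∈ Finset.range n, SC t
          - (η/2*(1 - L*η)) * ∑ t ∈ Finset.range n, SB t := by
      rw [Finset.sum_sub_distrib, Finset.sum_add_distrib, ← Finset.mul_sum,
        ← Finset.mul_sum, swapB, swapC, Finset.sum_const, Finset.card_univ,
        nsmul_eq_mul, hcΩdef]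
    rw [hL1, hL2] at hsum
    exact hsum
  have hSC0 : SC 0 = 0 := by
    rw [hSCdef]
    apply Finset.sum_eq_zero
    intro ω _
    simp only [hCdef]
    rw [hW0, hV0]
    simp
  -- the recursive variance bound
  set K : ℝ := ((n:ℝ) - b) / ((b:ℝ) * ((n:ℝ) - 1)) * (L ^ 2 * η ^ 2) with hKdef
  have hKnn : 0 ≤ K := by
    rw [hKdef]
    have h1 : (0:ℝ) ≤ (n:ℝ) - b := by linarith
    positivity
  have cardB_pos : (0:ℝ) < (Fintype.card (Batch n b) : ℝ) := by
    exact_mod_cast card_batch_pos hbn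
  have step5 : ∀ t : ℕ, t + 1 < n → SC (t+1) ≤ SC t + K * SB t := by
    intro t ht
    set j0 : Fin n := ⟨t+1, ht⟩ with hj0def
    set δ : (Fin n → Batch n b) → Fin n → F :=
      fun ω i => g i (W ω (t+1)) - g i (W ω t) with hδdef
    set y : (Fin n → Batch n b) → Fin n → F :=
      fun ω i => δ ω i - (n:ℝ)⁻¹ • ∑ j, δ ω j with hydef
    set e : (Fin n → Batch n b) → F := fun ω => G (W ω t) - V ω t with hedef
    set ξ : (Fin n → Batch n b) → F :=
      fun ω => (b:ℝ)⁻¹ • ∑ i ∈ (ω j0).1, y ω i with hξdef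
    have hysum : ∀ ω, ∑ i, y ω i = 0 := by
      intro ω
      simp only [hydef]
      rw [Finset.sum_sub_distrib, Finset.sum_const, Finset.card_univ, Fintype.card_fin,
        ← Nat.cast_smul_eq_nsmul ℝ, smul_smul, mul_inv_cancel₀ (ne_of_gt hn0), one_smul,
        sub_self]
    -- invariance under updating coordinate j0
    have hWt : ∀ ω s, W (Function.update ω j0 s) t = W ω t :=
      fun ω s => hWinv ω j0 s t (by simp [hj0def])
    have hVt : ∀ ω s, V (Function.update ω j0 s) t = V ω t :=
      fun ω s => hVinv ω j0 s t (by simp [hj0def])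
    have hWt1 : ∀ ω s, W (Function.update ω j0 s) (t+1) = W ω (t+1) := by
      intro ω s
      rw [hWs, hWs, hWt, hVt]
    have hyinv : ∀ ω s i, y (Function.update ω j0 s) i = y ω i := by
      intro ω s i
      simp only [hydef, hδdef, hWt, hWt1]
    have heinv : ∀ ω s, e (Function.update ω j0 s) = e ω := by
      intro ω s
      simp only [hedef, hWt, hVt]
    -- decomposition
    have hdecomp : ∀ ω, G (W ω (t+1)) - V ω (t+1) = e ω - ξ ω := by
      intro ω
      have h1 : G (W ω (t+1)) = G (W ω t) + (n:ℝ)⁻¹ • ∑ i, δ ω i := by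
        rw [hGavg, hGavg]
        have h2 : ∑ i, δ ω i = (∑ i, g i (W ω (t+1))) - ∑ i, g i (W ω t) := by
          simp only [hδdef]
          rw [Finset.sum_sub_distrib]
        rw [h2, smul_sub]
        abel
      have h2 : V ω (t+1) = (b:ℝ)⁻¹ • ∑ i ∈ (ω j0).1, δ ω i + V ω t := by
        rw [hVs ω t ht]
      have h3 : ξ ω = (b:ℝ)⁻¹ • ∑ i ∈ (ω j0).1, δ ω i - (n:ℝ)⁻¹ • ∑ j, δ ω j := by
        simp only [hξdef, hydef]
        rw [Finset.sum_sub_distrib, Finset.sum_const, (ω j0).2, smul_sub,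
          ← Nat.cast_smul_eq_nsmul ℝ, smul_smul, inv_mul_cancel₀ (ne_of_gt hb0), one_smul]
      rw [h1, h2, h3, hedef]
      beta_reduce
      abel
    -- the cross term vanishes
    have cross : ∑ ω : Fin n → Batch n b, ⟪e ω, ξ ω⟫ = 0 := by
      have key := sum_update_indep j0
        (fun ω s => ⟪e ω, (b:ℝ)⁻¹ • ∑ i ∈ s.1, y ω i⟫)
        (by
          intro ω s s'
          simp only [heinv, hyinv])
      have hRHS : ∑ ω : Fin n → Batch n b, ∑ s : Batch n b,
          ⟪e ω, (b:ℝ)⁻¹ • ∑ i ∈ s.1, y ω i⟫ = 0 := by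
        apply Finset.sum_eq_zero
        intro ω _
        rw [← inner_sum]
        have : ∑ s : Batch n b, (b:ℝ)⁻¹ • ∑ i ∈ s.1, y ω i
            = (b:ℝ)⁻¹ • ∑ s : Batch n b, ∑ i ∈ s.1, y ω i := by
          rw [Finset.smul_sum]
        rw [this, sum_batch_zero hn (y ω) (hysum ω), smul_zero, inner_zero_right]
      rw [hRHS] at key
      have := mul_eq_zero.1 key
      rcases this with h | h
      · exact absurd h (ne_of_gt cardB_pos)
      · exact h
    -- the quadratic term
    have quad : ∑ ω : Fin n → Batch n b, ‖ξ ω‖^2 ≤ K * SB t := by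
      have key := sum_update_indep j0
        (fun ω s => ‖(b:ℝ)⁻¹ • ∑ i ∈ s.1, y ω i‖^2)
        (by
          intro ω s s'
          simp only [hyinv])
      have hbound : ∀ ω : Fin n → Batch n b,
          ∑ s : Batch n b, ‖(b:ℝ)⁻¹ • ∑ i ∈ s.1, y ω i‖^2
          ≤ (Fintype.card (Batch n b) : ℝ) * (K * B ω t) := by
        intro ω
        rw [sum_batch_sq hn hb hbn (y ω) (hysum ω)]
        have hyd : ∀ i, ‖y ω i‖^2 ≤ ‖δ ω i‖^2 → True := fun _ _ => trivial
        have h1 : (n:ℝ)⁻¹ * ∑ i, ‖y ω i‖^2 ≤ L^2 * η^2 * B ω t := by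
          have h2 : ∑ i, ‖y ω i‖^2 ≤ ∑ i, ‖δ ω i‖^2 := by
            simp only [hydef]
            exact sum_norm_sub_mean_le (δ ω)
          have h3 : ∀ i, ‖δ ω i‖^2 ≤ (L * η * ‖V ω t‖)^2 := by
            intro i
            have h4 : ‖δ ω i‖ ≤ L * (η * ‖V ω t‖) := by
              have h5 := hgs i (W ω (t+1)) (W ω t)
              have h6 : W ω (t+1) - W ω t = -(η • V ω t) := by
                rw [hWs ω t]; abel
              rw [h6, norm_neg, norm_smul, Real.norm_eq_abs, abs_of_pos hη] at h5
              exact h5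
            have h7 : (0:ℝ) ≤ ‖δ ω i‖ := norm_nonneg _
            nlinarith [h4, h7]
          have h8 : ∑ i, ‖δ ω i‖^2 ≤ (n:ℝ) * (L * η * ‖V ω t‖)^2 := by
            calc ∑ i, ‖δ ω i‖^2 ≤ ∑ _i : Fin n, (L * η * ‖V ω t‖)^2 :=
                  Finset.sum_le_sum (fun i _ => h3 i)
              _ = (n:ℝ) * (L * η * ‖V ω t‖)^2 := by
                  rw [Finset.sum_const, Finset.card_univ, Fintype.card_fin, nsmul_eq_mul]
          have h9 : (n:ℝ)⁻¹ * ∑ i, ‖y ω i‖^2 ≤ (n:ℝ)⁻¹ * ((n:ℝ) * (L * η * ‖V ω t‖)^2) :=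
            mul_le_mul_of_nonneg_left (h2.trans h8) (by positivity)
          calc (n:ℝ)⁻¹ * ∑ i, ‖y ω i‖^2
              ≤ (n:ℝ)⁻¹ * ((n:ℝ) * (L * η * ‖V ω t‖)^2) := h9
            _ = L^2 * η^2 * B ω t := by
                field_simp [hBdef]
                ring
        have h10 : (0:ℝ) ≤ ((n:ℝ) - b) / ((b:ℝ) * ((n:ℝ) - 1)) := by
          have : (0:ℝ) ≤ (n:ℝ) - b := by linarith
          positivity
        calc (Fintype.card (Batch n b) : ℝ) * (((n:ℝ) - b) / ((b:ℝ) * ((n:ℝ) - 1)))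
              * ((n:ℝ)⁻¹ * ∑ i, ‖y ω i‖^2)
            ≤ (Fintype.card (Batch n b) : ℝ) * (((n:ℝ) - b) / ((b:ℝ) * ((n:ℝ) - 1)))
              * (L^2 * η^2 * B ω t) := by
              apply mul_le_mul_of_nonneg_left h1 (by positivity)
          _ = (Fintype.card (Batch n b) : ℝ) * (K * B ω t) := by
              rw [hKdef]; ring
      have hsum2 : ∑ ω : Fin n → Batch n b, ∑ s : Batch n b,
          ‖(b:ℝ)⁻¹ • ∑ i ∈ s.1, y ω i‖^2
          ≤ (Fintype.card (Batch n b) : ℝ) * (K * SB t) := by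
        calc ∑ ω : Fin n → Batch n b, ∑ s : Batch n b, ‖(b:ℝ)⁻¹ • ∑ i ∈ s.1, y ω i‖^2
            ≤ ∑ ω : Fin n → Batch n b, (Fintype.card (Batch n b) : ℝ) * (K * B ω t) :=
              Finset.sum_le_sum (fun ω _ => hbound ω)
          _ = (Fintype.card (Batch n b) : ℝ) * (K * SB t) := by
              rw [← Finset.mul_sum, hSBdef, ← Finset.mul_sum]
      rw [← key] at hsum2
      have := le_of_mul_le_mul_left (by
        calc (Fintype.card (Batch n b) : ℝ) * ∑ ω : Fin n → Batch n b, ‖ξ ω‖^2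
            = (Fintype.card (Batch n b) : ℝ) * ∑ ω : Fin n → Batch n b,
                ‖(b:ℝ)⁻¹ • ∑ i ∈ (ω j0).1, y ω i‖^2 := rfl
          _ ≤ (Fintype.card (Batch n b) : ℝ) * (K * SB t) := hsum2) cardB_pos
      exact this
    -- combine
    have hexp : SC (t+1) = SC t - 2 * ∑ ω : Fin n → Batch n b, ⟪e ω, ξ ω⟫
        + ∑ ω : Fin n → Batch n b, ‖ξ ω‖^2 := by
      have h1 : ∀ ω : Fin n → Batch n b, Cq ω (t+1)
          = Cq ω t - 2 * ⟪e ω, ξ ω⟫ + ‖ξ ω‖^2 := by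
        intro ω
        have h2 : ‖e ω‖^2 = Cq ω t := by simp only [hedef, hCdef]
        rw [← h2]
        simp only [hCdef]
        rw [hdecomp ω]
        exact norm_sub_sq_real _ _
      simp only [hSCdef]
      rw [Finset.sum_congr rfl (fun ω _ => h1 ω), Finset.sum_add_distrib,
        Finset.sum_sub_distrib, ← Finset.mul_sum]
    rw [hexp, cross]
    simp only [mul_zero, sub_zero]
    linarith [quad]
  -- iterate the variance bound
  have step6 : ∀ t : ℕ, t < n → SC t ≤ K * ∑ j ∈ Finset.range t, SB j := by
    intro t
    induction t with
    | zero => intro _; simp [hSC0]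
    | succ t ih =>
      intro ht
      have h1 := step5 t ht
      have h2 := ih (by omega)
      rw [Finset.sum_range_succ, mul_add]
      linarith
  obtain ⟨m, hm⟩ : ∃ m, n = m + 1 := ⟨n - 1, by omega⟩
  have step7 : ∑ t ∈ Finset.range n, SC t
      ≤ K * ((n:ℝ) - 1) * ∑ j ∈ Finset.range n, SB j := by
    have hSBsum_nn : 0 ≤ ∑ j ∈ Finset.range n, SB j :=
      Finset.sum_nonneg (fun j _ => hSBnn j)
    have hsub : ∀ t : ℕ, t < n → ∑ j ∈ Finset.range t, SB j
        ≤ ∑ j ∈ Finset.range n, SB j := by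
      intro t ht
      apply Finset.sum_le_sum_of_subset_of_nonneg
      · exact Finset.range_subset_range.2 (by omega)
      · intro j _ _; exact hSBnn j
    calc ∑ t ∈ Finset.range n, SC t
        = ∑ t ∈ Finset.range m, SC (t+1) + SC 0 := by
          rw [hm, Finset.sum_range_succ']
      _ = ∑ t ∈ Finset.range m, SC (t+1) := by rw [hSC0, add_zero]
      _ ≤ ∑ t ∈ Finset.range m, (K * ∑ j ∈ Finset.range n, SB j) := by
          apply Finset.sum_le_sum
          intro t ht
          have ht' : t + 1 < n := by
            rw [hm]; exact Nat.succ_lt_succ (Finset.mem_range.1 ht)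
          refine (step6 (t+1) ht').trans ?_
          exact mul_le_mul_of_nonneg_left (hsub (t+1) ht') hKnn
      _ = (m:ℝ) * (K * ∑ j ∈ Finset.range n, SB j) := by
          rw [Finset.sum_const, Finset.card_range, nsmul_eq_mul]
      _ = K * ((n:ℝ) - 1) * ∑ j ∈ Finset.range n, SB j := by
          have : (m:ℝ) = (n:ℝ) - 1 := by
            rw [hm]; push_cast; ring
          rw [this]; ring
  -- final combination
  have hSBsum_nn : 0 ≤ ∑ j ∈ Finset.range n, SB j :=
    Finset.sum_nonneg (fun j _ => hSBnn j)
  have h3 : η/2 * ∑ t ∈ Finset.range n, SA t ≤ cΩ * (P w0 - P wstar) := by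
    have h1 : (η/2) * ∑ t ∈ Finset.range n, SC t
        ≤ (η/2) * (K * ((n:ℝ)-1) * ∑ j ∈ Finset.range n, SB j) :=
      mul_le_mul_of_nonneg_left step7 (by positivity)
    have h4 : (η/2) * (K * ((n:ℝ)-1) * ∑ j ∈ Finset.range n, SB j)
        ≤ (η/2) * ((1 - L*η) * ∑ j ∈ Finset.range n, SB j) := by
      apply mul_le_mul_of_nonneg_left _ (by positivity)
      exact mul_le_mul_of_nonneg_right hbracket hSBsum_nn
    have h5 : (η/2) * ((1 - L*η) * ∑ j ∈ Finset.range n, SB j)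
        = (η/2*(1 - L*η)) * ∑ j ∈ Finset.range n, SB j := by ring
    linarith [step3, h1, h4]
  calc ∑ t ∈ Finset.range n, SA t
      = 2/η * (η/2 * ∑ t ∈ Finset.range n, SA t) := by
        field_simp
    _ ≤ 2/η * (cΩ * (P w0 - P wstar)) := by
        apply mul_le_mul_of_nonneg_left h3 (by positivity)

end SarahAux


open SarahAux

-- MAIN

local notation "⟪" x ", " y "⟫" => @inner ℝ _ _ x y

/-- **Corollary 4 of SARAH (nonconvex).** One inner loop of SARAH with `m = n − 1`
iterations, learning rate `η = 2/(L(√(4(n/b) − 3) + 1))`, and output chosen uniformly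
among `w_0,…,w_{n−1}` satisfies
`E‖∇P(w̃)‖² ≤ L(√(4(n/b) − 3) + 1)/n·(P(w₀) − P(w⋆))`. -/
theorem sarah_in_convergence_m_eq_n_sub_one
    {d n : ℕ} (hn : 2 ≤ n)
    (f : Fin n → Vec d → ℝ) (L : ℝ) (hL : 0 < L)
    (hdiff : ∀ i, Differentiable ℝ (f i))
    (hsmooth : ∀ i (w w' : Vec d),
      ‖gradient (f i) w - gradient (f i) w'‖ ≤ L * ‖w - w'‖)
    (P : Vec d → ℝ) (hP : P = fun w => (n : ℝ)⁻¹ * ∑ i, f i w)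
    (wstar : Vec d) (hmin : ∀ w, P wstar ≤ P w)
    (w0 : Vec d) (η : ℝ) (b : ℕ) (hb : 1 ≤ b) (hbn : b ≤ n)
    (hηdef : η = 2 / (L * (Real.sqrt (4 * ((n : ℝ) / (b : ℝ)) - 3) + 1))) :
    expec (fun p : (Fin n → Batch n b) × Fin n =>
        ‖gradient P ((sarahState f w0 η b (pad p.1) (p.2 : ℕ)).1)‖ ^ 2)
      ≤ L * (Real.sqrt (4 * ((n : ℝ) / (b : ℝ)) - 3) + 1) / (n : ℝ)
          * (P w0 - P wstar) := by
  classical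
  have hn0 : (0:ℝ) < n := by positivity
  have hb0 : (0:ℝ) < b := by exact_mod_cast hb
  have hn1 : (0:ℝ) < (n:ℝ) - 1 := by
    have : (2:ℝ) ≤ n := by exact_mod_cast hn
    linarith
  have hbnR : (b:ℝ) ≤ n := by exact_mod_cast hbn
  set sR : ℝ := Real.sqrt (4 * ((n : ℝ) / (b : ℝ)) - 3) with hsRdef
  have hnb1 : (1:ℝ) ≤ (n:ℝ) / b := (one_le_div hb0).2 hbnR
  have harg : (1:ℝ) ≤ 4 * ((n:ℝ)/b) - 3 := by linarith
  have hsR1 : (1:ℝ) ≤ sR := by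
    rw [hsRdef, show (1:ℝ) = Real.sqrt 1 by rw [Real.sqrt_one]]
    exact Real.sqrt_le_sqrt harg
  have hsq : sR ^ 2 = 4 * ((n:ℝ)/b) - 3 := Real.sq_sqrt (by linarith)
  have hsR0 : (0:ℝ) < sR + 1 := by linarith
  have hη : 0 < η := by
    rw [hηdef]
    positivity
  have hx : L * η * (sR + 1) = 2 := by
    rw [hηdef]
    field_simp
  have h4n : 4 * (n:ℝ) = (b:ℝ) * sR ^ 2 + 3 * b := by
    have := hsq
    field_simp at this
    linarith
  have hkey : ((n:ℝ) - b) / ((b:ℝ) * ((n:ℝ) - 1)) * (L ^ 2 * η ^ 2) * ((n:ℝ) - 1)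
      = 1 - L * η := by
    have h1 : ((n:ℝ) - b) / ((b:ℝ) * ((n:ℝ) - 1)) * (L ^ 2 * η ^ 2) * ((n:ℝ) - 1)
        = ((n:ℝ) - b) / b * (L * η) ^ 2 := by
      field_simp
    rw [h1]
    have hb' : (b:ℝ) ≠ 0 := ne_of_gt hb0
    have hs' : sR + 1 ≠ 0 := ne_of_gt hsR0
    field_simp
    linear_combination ((L*η)^2/4) * h4n
      + ((b:ℝ)/2 + (b:ℝ)*(L*η)*(sR-1)/4) * hx
  -- gradient of P
  set G : Vec d → Vec d := fun w => (n:ℝ)⁻¹ • ∑ i, gradient (f i) w with hGdef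
  have hPG : ∀ w, HasGradientAt P (G w) w := by
    intro w
    rw [hP]
    exact SarahAux.hasGradientAt_avg f hdiff _ w
  have hgeq : ∀ w, gradient P w = G w := fun w => (hPG w).gradient
  have hGlip : ∀ x y : Vec d, ‖G x - G y‖ ≤ L * ‖x - y‖ := by
    intro x y
    have h1 : G x - G y = (n:ℝ)⁻¹ • ∑ i, (gradient (f i) x - gradient (f i) y) := by
      rw [hGdef]
      simp only [Finset.sum_sub_distrib, smul_sub]
    rw [h1, norm_smul]
    have h2 : ‖∑ i, (gradient (f i) x - gradient (f i) y)‖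
        ≤ ∑ i : Fin n, (L * ‖x - y‖) := by
      refine (norm_sum_le _ _).trans (Finset.sum_le_sum ?_)
      intro i _
      exact hsmooth i x y
    rw [Finset.sum_const, Finset.card_univ, Fintype.card_fin, nsmul_eq_mul] at h2
    have h3 : ‖(n:ℝ)⁻¹‖ = (n:ℝ)⁻¹ := by
      rw [Real.norm_eq_abs, abs_of_pos (by positivity)]
    rw [h3]
    calc (n:ℝ)⁻¹ * ‖∑ i, (gradient (f i) x - gradient (f i) y)‖
        ≤ (n:ℝ)⁻¹ * ((n:ℝ) * (L * ‖x - y‖)) := by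
          apply mul_le_mul_of_nonneg_left h2 (by positivity)
      _ = L * ‖x - y‖ := by field_simp
  -- instantiate the abstract core
  have key := SarahAux.sarah_core (F := Vec d) hn hb hbn P G
    (fun i => gradient (f i)) L η hL hη hPG hGlip
    (fun i x y => hsmooth i x y) (fun x => rfl) wstar hmin w0
    (fun ω t => (sarahState f w0 η b (pad ω) t).1)
    (fun ω t => (sarahState f w0 η b (pad ω) t).2)
    (fun ω => rfl) (fun ω => rfl)
    (by
      intro ω t
      simp only [sarahState])
    (by
      intro ω t h
      have hpad : pad ω (t+1) = (ω ⟨t+1, h⟩).1 := by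
        unfold pad
        rw [dif_pos h]
      simp only [sarahState, hpad])
    (by
      intro ω j s t ht
      have := SarahAux.sarahState_congr f w0 η b (pad (Function.update ω j s)) (pad ω) t
        (by
          intro k hk1 hk2
          unfold pad
          by_cases hkn : k < n
          · simp only [dif_pos hkn]
            have hne : (⟨k, hkn⟩ : Fin n) ≠ j := by
              intro hc
              have : k = j.val := by rw [← hc]
              omega
            rw [Function.update_of_ne hne]
          · simp [dif_neg hkn])
      show (sarahState f w0 η b (pad (Function.update ω j s)) t).1
        = (sarahState f w0 η b (pad ω) t).1
      rw [this])
    (by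
      intro ω j s t ht
      have := SarahAux.sarahState_congr f w0 η b (pad (Function.update ω j s)) (pad ω) t
        (by
          intro k hk1 hk2
          unfold pad
          by_cases hkn : k < n
          · simp only [dif_pos hkn]
            have hne : (⟨k, hkn⟩ : Fin n) ≠ j := by
              intro hc
              have : k = j.val := by rw [← hc]
              omega
            rw [Function.update_of_ne hne]
          · simp [dif_neg hkn])
      show (sarahState f w0 η b (pad (Function.update ω j s)) t).2
        = (sarahState f w0 η b (pad ω) t).2
      rw [this])
    (le_of_eq hkey)
  -- unfold the expectation
  set cΩ : ℝ := (Fintype.card (Fin n → Batch n b) : ℝ) with hcΩdef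
  have hcΩpos : 0 < cΩ := by
    rw [hcΩdef]
    have h1 : Nonempty (Batch n b) := SarahAux.batch_nonempty hbn
    have h2 : Nonempty (Fin n → Batch n b) := ⟨fun _ => Classical.arbitrary _⟩
    exact_mod_cast Fintype.card_pos
  have hcard : (Fintype.card ((Fin n → Batch n b) × Fin n) : ℝ) = cΩ * n := by
    rw [Fintype.card_prod, Fintype.card_fin, hcΩdef]
    push_cast
    ring
  have hsplit : ∑ p : (Fin n → Batch n b) × Fin n,
      ‖gradient P ((sarahState f w0 η b (pad p.1) (p.2 : ℕ)).1)‖ ^ 2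
      = ∑ t ∈ Finset.range n, ∑ ω : Fin n → Batch n b,
          ‖G ((sarahState f w0 η b (pad ω) t).1)‖ ^ 2 := by
    rw [Fintype.sum_prod_type]
    have inner_eq : ∀ ω : Fin n → Batch n b,
        ∑ t : Fin n, ‖gradient P ((sarahState f w0 η b (pad ω) (t : ℕ)).1)‖ ^ 2
        = ∑ t ∈ Finset.range n, ‖G ((sarahState f w0 η b (pad ω) t).1)‖ ^ 2 := by
      intro ω
      rw [Fin.sum_univ_eq_sum_range
        (fun t => ‖gradient P ((sarahState f w0 η b (pad ω) t).1)‖ ^ 2) n]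
      apply Finset.sum_congr rfl
      intro t _
      rw [hgeq]
    rw [Finset.sum_congr rfl (fun ω _ => inner_eq ω)]
    exact Finset.sum_comm
  rw [expec, hcard, hsplit]
  have hfinal : (cΩ * (n:ℝ))⁻¹ * (2/η * (cΩ * (P w0 - P wstar)))
      = L * (sR + 1) / (n:ℝ) * (P w0 - P wstar) := by
    have h2η : 2/η = L * (sR + 1) := by
      rw [hηdef]
      have : L * (sR + 1) ≠ 0 := by positivity
      field_simp
    rw [h2η]
    field_simp
  calc (cΩ * (n:ℝ))⁻¹ * ∑ t ∈ Finset.range n, ∑ ω : Fin n → Batch n b,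
        ‖G ((sarahState f w0 η b (pad ω) t).1)‖ ^ 2
      ≤ (cΩ * (n:ℝ))⁻¹ * (2/η * (cΩ * (P w0 - P wstar))) := by
        apply mul_le_mul_of_nonneg_left key (by positivity)
    _ = L * (sR + 1) / (n:ℝ) * (P w0 - P wstar) := hfinal
end
end

section
/- Consider one inner loop of SARAH (SARAH-IN) with each f_i L-smooth. For every j ≥ 1, conditioned on the history F_j generated by w_0 and the mini-batches I_1,...,I_{j−1}: E[ ||∇P(w_j) − v_j||² | F_j ] = ||∇P(w_{j−1}) − v_{j−1}||² − ||∇P(w_j) − ∇P(w_{j−1})||² + E[ ||v_j − v_{j−1}||² | F_j ]. -/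
open scoped BigOperators

noncomputable section

-- aux 1: state only depends on past batches
lemma sarahState_congr {d n : ℕ} (f : Fin n → Vec d → ℝ) (w0 : Vec d) (η : ℝ) (b : ℕ)
    {I I' : ℕ → Finset (Fin n)} :
    ∀ t, (∀ s, s ≤ t → I s = I' s) → sarahState f w0 η b I t = sarahState f w0 η b I' t
  | 0, _ => rfl
  | t + 1, h => by
    have ih := sarahState_congr f w0 η b t (fun s hs => h s (hs.trans (Nat.le_succ t)))
    simp only [sarahState, ih, h (t+1) le_rfl]

-- aux 2: expec linearity bits
lemma expec_add {Ω : Type*} [Fintype Ω] (F G : Ω → ℝ) :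
    expec (fun ω => F ω + G ω) = expec F + expec G := by
  simp [expec, Finset.sum_add_distrib, mul_add]

lemma expec_sub {Ω : Type*} [Fintype Ω] (F G : Ω → ℝ) :
    expec (fun ω => F ω - G ω) = expec F - expec G := by
  simp [expec, Finset.sum_sub_distrib, mul_sub]

lemma expec_const {Ω : Type*} [Fintype Ω] (h : (Fintype.card Ω : ℝ) ≠ 0) (C : ℝ) :
    expec (fun _ : Ω => C) = C := by
  simp [expec]
  field_simp

lemma expec_const_mul {Ω : Type*} [Fintype Ω] (a : ℝ) (F : Ω → ℝ) :
    expec (fun ω => a * F ω) = a * expec F := by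
  unfold expec
  rw [show (∑ ω, a * F ω) = a * ∑ ω, F ω from (Finset.mul_sum _ _ _).symm]
  ring

-- aux 3: counting
lemma card_batch_mem {n b : ℕ} (hb : 1 ≤ b) (i : Fin n) :
    (Finset.univ.filter (fun J : Batch n b => i ∈ J.1)).card = (n-1).choose (b-1) := by
  have hcard : ((Finset.univ.erase i).powersetCard (b-1)).card = (n-1).choose (b-1) := by
    rw [Finset.card_powersetCard, Finset.card_erase_of_mem (Finset.mem_univ i),
      Finset.card_univ, Fintype.card_fin]
  rw [← hcard]
  refine Finset.card_bij' (fun J _ => J.1.erase i)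
    (fun t ht => (⟨insert i t, ?_⟩ : Batch n b)) ?_ ?_ ?_ ?_
  · rcases Finset.mem_powersetCard.1 ht with ⟨hsub, hcard'⟩
    have hi : i ∉ t := fun hit => (Finset.mem_erase.1 (hsub hit)).1 rfl
    rw [Finset.card_insert_of_notMem hi, hcard']
    omega
  · intro J hJ
    have hiJ : i ∈ J.1 := (Finset.mem_filter.1 hJ).2
    rw [Finset.mem_powersetCard]
    refine ⟨fun x hx => ?_, ?_⟩
    · rcases Finset.mem_erase.1 hx with ⟨hxi, _⟩
      exact Finset.mem_erase.2 ⟨hxi, Finset.mem_univ x⟩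
    · rw [Finset.card_erase_of_mem hiJ, J.2]
  · intro t ht
    exact Finset.mem_filter.2 ⟨Finset.mem_univ _, Finset.mem_insert_self i t⟩
  · intro J hJ
    have hiJ : i ∈ J.1 := (Finset.mem_filter.1 hJ).2
    apply Subtype.ext
    simp [Finset.insert_erase hiJ]
  · intro t ht
    rcases Finset.mem_powersetCard.1 ht with ⟨hsub, hcard'⟩
    have hi : i ∉ t := fun hit => (Finset.mem_erase.1 (hsub hit)).1 rfl
    simp [Finset.erase_insert hi]

lemma card_batch {n b : ℕ} : Fintype.card (Batch n b) = n.choose b := by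
  rw [show Fintype.card (Batch n b)
      = Fintype.card {s : Finset (Fin n) // s.card = b} from rfl,
    Fintype.card_finset_len, Fintype.card_fin]

lemma sum_batch {n b : ℕ} (hb : 1 ≤ b) (h : Fin n → ℝ) :
    ∑ J : Batch n b, ∑ i ∈ J.1, h i = ((n-1).choose (b-1) : ℝ) * ∑ i, h i := by
  have step : ∀ J : Batch n b, ∑ i ∈ J.1, h i
      = ∑ i : Fin n, if i ∈ J.1 then h i else 0 := by
    intro J
    rw [Finset.sum_ite_mem, Finset.univ_inter]
  simp only [step]
  rw [Finset.sum_comm]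
  have : ∀ i : Fin n, ∑ J : Batch n b, (if i ∈ J.1 then h i else 0)
      = ((n-1).choose (b-1) : ℝ) * h i := by
    intro i
    rw [← Finset.sum_filter, Finset.sum_const, card_batch_mem hb i, nsmul_eq_mul]
  simp only [this, ← Finset.mul_sum]

-- aux 4: the key nat identity as real
lemma choose_ratio {n b : ℕ} (hn : 1 ≤ n) (hb : 1 ≤ b) (hbn : b ≤ n) :
    ((n.choose b : ℝ))⁻¹ * ((b : ℝ)⁻¹ * ((n-1).choose (b-1) : ℝ)) = (n : ℝ)⁻¹ := by
  have key : n * (n-1).choose (b-1) = n.choose b * b := by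
    obtain ⟨n', rfl⟩ : ∃ n', n = n'+1 := ⟨n-1, by omega⟩
    obtain ⟨b', rfl⟩ : ∃ b', b = b'+1 := ⟨b-1, by omega⟩
    simpa using Nat.add_one_mul_choose_eq n' b'
  have keyR : (n : ℝ) * ((n-1).choose (b-1) : ℝ) = (n.choose b : ℝ) * (b : ℝ) := by
    exact_mod_cast congrArg (Nat.cast : ℕ → ℝ) key
  have h1 : (n.choose b : ℝ) ≠ 0 := Nat.cast_ne_zero.2 (Nat.choose_pos hbn).ne'
  have h2 : (b : ℝ) ≠ 0 := Nat.cast_ne_zero.2 (by omega)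
  have h3 : (n : ℝ) ≠ 0 := Nat.cast_ne_zero.2 (by omega)
  field_simp
  linarith

-- aux 5: unbiasedness for inner products
lemma expec_inner {d n b : ℕ} (hn : 1 ≤ n) (hb : 1 ≤ b) (hbn : b ≤ n)
    (c : Vec d) (x : Fin n → Vec d) :
    expec (fun J : Batch n b => @inner ℝ _ _ c ((b:ℝ)⁻¹ • ∑ i ∈ J.1, x i))
      = @inner ℝ _ _ c ((n:ℝ)⁻¹ • ∑ i, x i) := by
  simp only [inner_smul_right, inner_sum, expec, card_batch]
  rw [← Finset.mul_sum, sum_batch hb (fun i => @inner ℝ _ _ c (x i))]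
  rw [← mul_assoc, ← mul_assoc, mul_assoc ((n.choose b:ℝ))⁻¹, choose_ratio hn hb hbn]

-- aux 6: gradient of the average
lemma gradient_avg {d n : ℕ} (f : Fin n → Vec d → ℝ) (hdiff : ∀ i, Differentiable ℝ (f i))
    (w : Vec d) :
    gradient (fun y => (n:ℝ)⁻¹ * ∑ i, f i y) w = (n:ℝ)⁻¹ • ∑ i, gradient (f i) w := by
  have h : HasGradientAt (fun y => (n:ℝ)⁻¹ * ∑ i, f i y)
      ((n:ℝ)⁻¹ • ∑ i, gradient (f i) w) w := by
    rw [hasGradientAt_iff_hasFDerivAt]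
    have h1 : ∀ i ∈ (Finset.univ : Finset (Fin n)), HasFDerivAt (f i)
        ((InnerProductSpace.toDual ℝ (Vec d)) (gradient (f i) w)) w := fun i _ =>
      hasGradientAt_iff_hasFDerivAt.1 ((hdiff i).differentiableAt.hasGradientAt)
    have h2 := (HasFDerivAt.sum h1).const_mul ((n:ℝ)⁻¹)
    have h3 : (InnerProductSpace.toDual ℝ (Vec d)) ((n:ℝ)⁻¹ • ∑ i, gradient (f i) w)
        = (n:ℝ)⁻¹ • ∑ i, (InnerProductSpace.toDual ℝ (Vec d)) (gradient (f i) w) := by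
      simp [map_sum]
    rw [h3]
    simpa only [Finset.sum_apply] using h2
  exact h.gradient

-- aux 7: the pointwise inner-product identity
lemma key_ident {d : ℕ} (A g v Δ : Vec d) :
    ‖A - (Δ + v)‖^2
      = ((‖g - v‖^2 - ‖A - g‖^2) + 2 * (inner ℝ (A - v) (A - g) : ℝ) + ‖Δ‖^2)
        - 2 * (inner ℝ (A - v) Δ : ℝ) := by
  have h0 : A - (Δ + v) = (A - v) - Δ := by abel
  have h1 : A - v = (A - g) + (g - v) := by abel
  have e1 : ‖A - v‖^2 = ‖A-g‖^2 + 2 * (inner ℝ (A-g) (g-v) : ℝ) + ‖g-v‖^2 := by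
    rw [h1, norm_add_sq_real]
  have e2 : (inner ℝ (A - v) (A - g) : ℝ) = ‖A-g‖^2 + (inner ℝ (A-g) (g-v) : ℝ) := by
    nth_rewrite 1 [h1]
    rw [inner_add_left, real_inner_self_eq_norm_sq, real_inner_comm]
  rw [h0, norm_sub_sq_real, e1, e2]
  ring

-- aux 8: putting expectation pieces together
lemma expec_helper {Ω : Type*} [Fintype Ω] (h : (Fintype.card Ω : ℝ) ≠ 0)
    (C e : ℝ) (G H : Ω → ℝ) (hH : expec H = e) :
    expec (fun ω => (C + 2 * e + G ω) - 2 * H ω) = C + expec G := by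
  have s1 : expec (fun ω => (C + 2 * e + G ω) - 2 * H ω)
      = expec (fun ω => C + 2 * e + G ω) - expec (fun ω => 2 * H ω) := expec_sub _ _
  have s2 : expec (fun ω => C + 2 * e + G ω)
      = expec (fun _ => C + 2 * e) + expec G := expec_add _ _
  rw [s1, s2, expec_const h, expec_const_mul, hH]
  ring

/-- Conditional expectation step of Lemma 2: conditioned on the history `I_1,…,I_{j−1}`
(encoded by a fixed batch sequence `Ihist`, with the `j`-th batch `J` resampled
uniformly), for `j ≥ 1`:
`E[‖∇P(w_j) − v_j‖² | F_j] = ‖∇P(w_{j−1}) − v_{j−1}‖² − ‖∇P(w_j) − ∇P(w_{j−1})‖²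
  + E[‖v_j − v_{j−1}‖² | F_j]`. -/
theorem sarah_in_conditional_variance_step
    {d n : ℕ} (hn : 1 ≤ n)
    (f : Fin n → Vec d → ℝ) (L : ℝ) (hL : 0 < L)
    (hdiff : ∀ i, Differentiable ℝ (f i))
    (hsmooth : ∀ i (w w' : Vec d),
      ‖gradient (f i) w - gradient (f i) w'‖ ≤ L * ‖w - w'‖)
    (P : Vec d → ℝ) (hP : P = fun w => (n : ℝ)⁻¹ * ∑ i, f i w)
    (w0 : Vec d) (η : ℝ) (hη : 0 < η) (b : ℕ) (hb : 1 ≤ b) (hbn : b ≤ n)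
    (Ihist : ℕ → Finset (Fin n)) (hhist : ∀ t, (Ihist t).card = b)
    (j : ℕ) (hj : 1 ≤ j) :
    expec (fun J : Batch n b =>
        ‖gradient P ((sarahState f w0 η b (Function.update Ihist j J.1) j).1)
          - (sarahState f w0 η b (Function.update Ihist j J.1) j).2‖ ^ 2)
      = ‖gradient P ((sarahState f w0 η b Ihist (j - 1)).1)
            - (sarahState f w0 η b Ihist (j - 1)).2‖ ^ 2
        - ‖gradient P ((sarahState f w0 η b Ihist j).1)
            - gradient P ((sarahState f w0 η b Ihist (j - 1)).1)‖ ^ 2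
        + expec (fun J : Batch n b =>
            ‖(sarahState f w0 η b (Function.update Ihist j J.1) j).2
              - (sarahState f w0 η b Ihist (j - 1)).2‖ ^ 2) := by
  obtain ⟨k, rfl⟩ : ∃ k, j = k + 1 := ⟨j - 1, by omega⟩
  have hupdk : ∀ J : Batch n b,
      sarahState f w0 η b (Function.update Ihist (k+1) J.1) k
        = sarahState f w0 η b Ihist k := fun J =>
    sarahState_congr f w0 η b k (fun s hs => Function.update_of_ne (by omega) _ _)
  simp only [Nat.add_sub_cancel, sarahState, hupdk, Function.update_self]
  set w : Vec d := (sarahState f w0 η b Ihist k).1 with hw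
  set v : Vec d := (sarahState f w0 η b Ihist k).2 with hv
  set w' : Vec d := w - η • v with hw'
  set x : Fin n → Vec d := fun i => gradient (f i) w' - gradient (f i) w with hx
  set A : Vec d := gradient P w' with hA
  set g : Vec d := gradient P w with hg
  have hD : A - g = (n:ℝ)⁻¹ • ∑ i, x i := by
    rw [hA, hg, hP, gradient_avg f hdiff, gradient_avg f hdiff, ← smul_sub,
      ← Finset.sum_sub_distrib]
  have hcard : (Fintype.card (Batch n b) : ℝ) ≠ 0 := by
    rw [card_batch]; exact Nat.cast_ne_zero.2 (Nat.choose_pos hbn).ne'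
  set e : ℝ := (inner ℝ (A - v) (A - g) : ℝ) with he
  have hE : expec (fun J : Batch n b =>
      (inner ℝ (A - v) ((b:ℝ)⁻¹ • ∑ i ∈ J.1, x i) : ℝ)) = e := by
    rw [expec_inner hn hb hbn (A - v) x, he, hD]
  have hpt : ∀ J : Batch n b,
      ‖A - ((b:ℝ)⁻¹ • ∑ i ∈ J.1, x i + v)‖^2
        = ((‖g - v‖^2 - ‖A - g‖^2) + 2 * e + ‖(b:ℝ)⁻¹ • ∑ i ∈ J.1, x i‖^2)
          - 2 * (inner ℝ (A - v) ((b:ℝ)⁻¹ • ∑ i ∈ J.1, x i) : ℝ) := fun J =>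
    key_ident A g v _
  calc expec (fun J : Batch n b => ‖A - ((b:ℝ)⁻¹ • ∑ i ∈ J.1, x i + v)‖^2)
      = expec (fun J : Batch n b =>
          ((‖g - v‖^2 - ‖A - g‖^2) + 2 * e + ‖(b:ℝ)⁻¹ • ∑ i ∈ J.1, x i‖^2)
            - 2 * (inner ℝ (A - v) ((b:ℝ)⁻¹ • ∑ i ∈ J.1, x i) : ℝ)) :=
        congrArg expec (funext hpt)
    _ = (‖g - v‖^2 - ‖A - g‖^2)
        + expec (fun J : Batch n b => ‖(b:ℝ)⁻¹ • ∑ i ∈ J.1, x i‖^2) :=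
        expec_helper hcard _ e _ _ hE
    _ = ‖g - v‖^2 - ‖A - g‖^2
        + expec (fun J : Batch n b => ‖(b:ℝ)⁻¹ • ∑ i ∈ J.1, x i + v - v‖^2) := by
        congr 1
        exact congrArg expec (funext fun J => by rw [add_sub_cancel_right])
end
end
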